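/- Let E₁ = [[i,0],[0,−i]], E₂ = [[0,−1],[1,0]], E₃ = [[0,i],[i,0]] ∈ su(2), which satisfy [E₂,E₃] = −2E₁, [E₃,E₁] = −2E₂, [E₁,E₂] = −2E₃. If Y₁, Y₂, Y₃ ∈ su(2) satisfy Y₁ ≠ 0 and the same relations [Y₂,Y₃] = −2Y₁, [Y₃,Y₁] = −2Y₂, [Y₁,Y₂] = −2Y₃, then there exists ρ in the special unitary group SU(2) (2×2 complex unitary matrices of determinant 1) such that Yᵢ = ρ Eᵢ ρ⁻¹ for i = 1, 2, 3. -/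

import Mathlib

open Matrix


private lemma sq_scalar (A : Matrix (Fin 2) (Fin 2) ℂ) (h : A.trace = 0) :
    A * A = (-A.det) • (1 : Matrix (Fin 2) (Fin 2) ℂ) := by
  have h' : A 1 1 = -A 0 0 := by
    rw [Matrix.trace_fin_two] at h; linear_combination h
  ext i j
  fin_cases i <;> fin_cases j <;>
    simp [Matrix.mul_apply, Fin.sum_univ_two, Matrix.det_fin_two, Matrix.one_apply, h'] <;> ring

private lemma anticomm_scalar (A B : Matrix (Fin 2) (Fin 2) ℂ) (hA : A.trace = 0) (hB : B.trace = 0) :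
    A * B + B * A = ((A*B).trace) • (1 : Matrix (Fin 2) (Fin 2) ℂ) := by
  have hA' : A 1 1 = -A 0 0 := by rw [Matrix.trace_fin_two] at hA; linear_combination hA
  have hB' : B 1 1 = -B 0 0 := by rw [Matrix.trace_fin_two] at hB; linear_combination hB
  ext i j
  fin_cases i <;> fin_cases j <;>
    simp [Matrix.mul_apply, Fin.sum_univ_two, Matrix.trace_fin_two, Matrix.one_apply, hA', hB'] <;> ring

private lemma products (A B C : Matrix (Fin 2) (Fin 2) ℂ)
    (htA : A.trace = 0) (htB : B.trace = 0) (htC : C.trace = 0)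
    (hA0 : A ≠ 0)
    (h₁ : B * C - C * B = (-2 : ℂ) • A)
    (h₂ : C * A - A * C = (-2 : ℂ) • B)
    (h₃ : A * B - B * A = (-2 : ℂ) • C) :
    A * B = -C ∧ C * A = -B ∧ C * B = A ∧ A * A = -1 ∧ B * B = -1 := by
  set p := (A*B).trace with hp
  set q := (B*C).trace with hq
  set r := (C*A).trace with hr
  have hsA := sq_scalar A htA
  have hsB := sq_scalar B htB
  have hsC := sq_scalar C htC
  have hacAB := anticomm_scalar A B htA htB
  have hacBC := anticomm_scalar B C htB htC
  have hacCA := anticomm_scalar C A htC htA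
  have hD1 : (2:ℂ) • (A*B) = p • (1 : Matrix (Fin 2) (Fin 2) ℂ) - (2:ℂ) • C := by
    linear_combination (norm := module) hacAB + h₃
  have hD2 : (2:ℂ) • (B*C) = q • (1 : Matrix (Fin 2) (Fin 2) ℂ) - (2:ℂ) • A := by
    linear_combination (norm := module) hacBC + h₁
  have hD2' : (2:ℂ) • (C*B) = q • (1 : Matrix (Fin 2) (Fin 2) ℂ) + (2:ℂ) • A := by
    linear_combination (norm := module) hacBC - h₁
  have hD3 : (2:ℂ) • (C*A) = r • (1 : Matrix (Fin 2) (Fin 2) ℂ) - (2:ℂ) • B := by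
    linear_combination (norm := module) hacCA + h₂
  have hD3' : (2:ℂ) • (A*C) = r • (1 : Matrix (Fin 2) (Fin 2) ℂ) + (2:ℂ) • B := by
    linear_combination (norm := module) hacCA - h₂
  -- E1 : multiply hD1 on left by A
  have E1 : ((-2:ℂ) * A.det) • B = p • A - r • (1 : Matrix (Fin 2) (Fin 2) ℂ) - (2:ℂ) • B := by
    have h' := congrArg (fun M => A * M) hD1
    simp only [Matrix.mul_smul, Matrix.mul_sub, Matrix.mul_one, ← Matrix.mul_assoc, hsA,
      Matrix.smul_mul, Matrix.one_mul] at h'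
    linear_combination (norm := module) h' - hD3'
  have E2 : ((-2:ℂ) * C.det) • A = r • C - q • (1 : Matrix (Fin 2) (Fin 2) ℂ) - (2:ℂ) • A := by
    have h' := congrArg (fun M => C * M) hD3
    simp only [Matrix.mul_smul, Matrix.mul_sub, Matrix.mul_one, ← Matrix.mul_assoc, hsC,
      Matrix.smul_mul, Matrix.one_mul] at h'
    linear_combination (norm := module) h' - hD2'
  have E3 : ((-2:ℂ) * B.det) • C = q • B - p • (1 : Matrix (Fin 2) (Fin 2) ℂ) - (2:ℂ) • C := by
    have h' := congrArg (fun M => B * M) hD2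
    simp only [Matrix.mul_smul, Matrix.mul_sub, Matrix.mul_one, ← Matrix.mul_assoc, hsB,
      Matrix.smul_mul, Matrix.one_mul] at h'
    have hD1' : (2:ℂ) • (B*A) = p • (1 : Matrix (Fin 2) (Fin 2) ℂ) + (2:ℂ) • C := by
      linear_combination (norm := module) hacAB - h₃
    linear_combination (norm := module) h' - hD1'
  -- traces
  have hr0 : r = 0 := by
    have := congrArg Matrix.trace E1
    simpa [Matrix.trace_smul, Matrix.trace_sub, Matrix.trace_one, htA, htB] using this
  have hq0 : q = 0 := by
    have := congrArg Matrix.trace E2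
    simpa [Matrix.trace_smul, Matrix.trace_sub, Matrix.trace_one, htA, htC] using this
  have hp0 : p = 0 := by
    have := congrArg Matrix.trace E3
    simpa [Matrix.trace_smul, Matrix.trace_sub, Matrix.trace_one, htB, htC] using this
  -- C.det = 1
  have hdC : C.det = 1 := by
    rw [hr0, hq0] at E2
    have h' : ((2:ℂ) - 2 * C.det) • A = 0 := by
      linear_combination (norm := module) E2
    rcases smul_eq_zero.mp h' with h | h
    · linear_combination -h / 2
    · exact absurd h hA0
  -- associativity: A.det = C.det and B.det = A.det
  have hdA : A.det = 1 := by
    have h1' := congrArg (fun M => A * M) hD2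
    simp only [Matrix.mul_smul, Matrix.mul_sub, Matrix.mul_one, ← Matrix.mul_assoc, hsA,
      Matrix.smul_mul, Matrix.one_mul] at h1'
    have h2' := congrArg (fun M => M * C) hD1
    simp only [Matrix.smul_mul, Matrix.sub_mul, Matrix.one_mul, Matrix.mul_assoc, hsC] at h2'
    rw [show A * (B * C) = A * B * C from (Matrix.mul_assoc A B C).symm] at h2'
    have hcomb : q • A + ((2:ℂ) * A.det) • (1 : Matrix (Fin 2) (Fin 2) ℂ)
        = p • C + ((2:ℂ) * C.det) • (1 : Matrix (Fin 2) (Fin 2) ℂ) := by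
      linear_combination (norm := module) h2' - h1'
    have := congrArg Matrix.trace hcomb
    simp [Matrix.trace_smul, Matrix.trace_add, Matrix.trace_one, htA, htC] at this
    rw [hdC] at this
    exact this
  have hdB : B.det = 1 := by
    have h1' := congrArg (fun M => M * A) hD2
    simp only [Matrix.smul_mul, Matrix.sub_mul, Matrix.one_mul, Matrix.mul_assoc, hsA] at h1'
    rw [show B * (C * A) = B * C * A from (Matrix.mul_assoc B C A).symm] at h1'
    have h2' := congrArg (fun M => B * M) hD3
    simp only [Matrix.mul_smul, Matrix.mul_sub, Matrix.mul_one, ← Matrix.mul_assoc, hsB,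
      Matrix.smul_mul, Matrix.one_mul] at h2'
    have t1 := congrArg Matrix.trace h1'
    have t2 := congrArg Matrix.trace h2'
    simp [Matrix.trace_smul, Matrix.trace_sub, Matrix.trace_one, htA, htB] at t1 t2
    rw [hdA] at t1
    rw [t1] at t2
    linear_combination -t2 / 2
  refine ⟨?_, ?_, ?_, ?_, ?_⟩
  · have h' : (2:ℂ) • (A*B) = (2:ℂ) • (-C) := by
      rw [hD1, hp0]; module
    exact smul_right_injective _ (two_ne_zero) h'
  · have h' : (2:ℂ) • (C*A) = (2:ℂ) • (-B) := by
      rw [hD3, hr0]; module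
    exact smul_right_injective _ (two_ne_zero) h'
  · have h' : (2:ℂ) • (C*B) = (2:ℂ) • A := by
      rw [hD2', hq0]; module
    exact smul_right_injective _ (two_ne_zero) h'
  · rw [hsA, hdA]; simp
  · rw [hsB, hdB]; simp


private lemma eigvec (A : Matrix (Fin 2) (Fin 2) ℂ) (htA : A.trace = 0)
    (hA2 : A * A = -1) :
    ∃ u : Fin 2 → ℂ, u ≠ 0 ∧ A *ᵥ u = Complex.I • u := by
  have e00 : A 0 0 * A 0 0 + A 0 1 * A 1 0 = -1 := by
    have := congrFun (congrFun hA2 0) 0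
    simpa [Matrix.mul_apply, Fin.sum_univ_two, Matrix.one_apply] using this
  have e01 : A 0 0 * A 0 1 + A 0 1 * A 1 1 = 0 := by
    have := congrFun (congrFun hA2 0) 1
    simpa [Matrix.mul_apply, Fin.sum_univ_two, Matrix.one_apply] using this
  have e10 : A 1 0 * A 0 0 + A 1 1 * A 1 0 = 0 := by
    have := congrFun (congrFun hA2 1) 0
    simpa [Matrix.mul_apply, Fin.sum_univ_two, Matrix.one_apply] using this
  have e11 : A 1 0 * A 0 1 + A 1 1 * A 1 1 = -1 := by
    have := congrFun (congrFun hA2 1) 1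
    simpa [Matrix.mul_apply, Fin.sum_univ_two, Matrix.one_apply] using this
  have htr : A 1 1 = -A 0 0 := by
    rw [Matrix.trace_fin_two] at htA; linear_combination htA
  by_cases h : A 0 0 = -Complex.I ∧ A 1 0 = 0
  · refine ⟨![A 0 1, A 1 1 + Complex.I], ?_, ?_⟩
    · intro h0
      have h1 := congrFun h0 1
      simp only [Matrix.cons_val_one, Matrix.head_cons, Matrix.cons_val_zero, Pi.zero_apply] at h1
      rw [htr, h.1] at h1
      apply Complex.I_ne_zero
      linear_combination h1 / 2
    · funext i
      fin_cases i
      · simp [Matrix.mulVec, dotProduct, Fin.sum_univ_two]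
        linear_combination e01
      · simp [Matrix.mulVec, dotProduct, Fin.sum_univ_two]
        linear_combination e11 - Complex.I_sq
  · refine ⟨![A 0 0 + Complex.I, A 1 0], ?_, ?_⟩
    · intro h0
      apply h
      constructor
      · have := congrFun h0 0
        simp at this
        linear_combination this
      · simpa using congrFun h0 1
    · funext i
      fin_cases i
      · simp [Matrix.mulVec, dotProduct, Fin.sum_univ_two]
        linear_combination e00 - Complex.I_sq
      · simp [Matrix.mulVec, dotProduct, Fin.sum_univ_two]
        linear_combination e10



set_option maxHeartbeats 1000000 in
private lemma build (A B C : Matrix (Fin 2) (Fin 2) ℂ)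
    (hAH : Aᴴ = -A) (hBH : Bᴴ = -B) (htA : A.trace = 0)
    (hA2 : A * A = -1) (hB2 : B * B = -1)
    (hAB : A * B = -C) (hCA : C * A = -B) (hCB : C * B = A) :
    ∃ ρ : Matrix (Fin 2) (Fin 2) ℂ, ρᴴ * ρ = 1 ∧ ρ.det = 1 ∧
      A = ρ * !![Complex.I, 0; 0, -Complex.I] * ρ⁻¹ ∧
      B = ρ * !![0, -1; 1, 0] * ρ⁻¹ ∧
      C = ρ * !![0, Complex.I; Complex.I, 0] * ρ⁻¹ := by
  obtain ⟨u, hu0, hAu⟩ := eigvec A htA hA2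
  set v : Fin 2 → ℂ := B *ᵥ u with hv
  have hCu : C *ᵥ u = Complex.I • v := by
    have h' : Complex.I • (C *ᵥ u) = -(B *ᵥ u) := by
      rw [← Matrix.mulVec_smul, ← hAu, Matrix.mulVec_mulVec, hCA, Matrix.neg_mulVec]
    calc C *ᵥ u = (-Complex.I) • (Complex.I • (C *ᵥ u)) := by
          rw [smul_smul]; simp [Complex.I_mul_I]
      _ = Complex.I • v := by rw [h', hv, smul_neg, neg_smul, neg_neg]
  have hAv : A *ᵥ v = (-Complex.I) • v := by
    rw [hv, Matrix.mulVec_mulVec, hAB, Matrix.neg_mulVec, ← hv, hCu, neg_smul]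
  have hBv : B *ᵥ v = -u := by
    rw [hv, Matrix.mulVec_mulVec, hB2]
    simp [Matrix.neg_mulVec]
  have hCv : C *ᵥ v = Complex.I • u := by
    rw [hv, Matrix.mulVec_mulVec, hCB, hAu]
  -- inner products
  have hBHB : Bᴴ * B = 1 := by rw [hBH, neg_mul, hB2, neg_neg]
  have hvv : star v ⬝ᵥ v = star u ⬝ᵥ u := by
    rw [hv, star_mulVec, dotProduct_mulVec, vecMul_vecMul, hBHB, vecMul_one]
  have huA : star u ᵥ* A = Complex.I • star u := by
    have h1 : star (Aᴴ *ᵥ u) = star u ᵥ* A := by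
      rw [star_mulVec, conjTranspose_conjTranspose]
    rw [← h1, hAH, Matrix.neg_mulVec, hAu]
    simp [star_smul, Complex.star_def, Complex.conj_I]
  have huv : star u ⬝ᵥ v = 0 := by
    have k1 : star u ⬝ᵥ (A *ᵥ v) = -Complex.I * (star u ⬝ᵥ v) := by
      rw [hAv, dotProduct_smul]; simp [smul_eq_mul]
    have k2 : star u ⬝ᵥ (A *ᵥ v) = Complex.I * (star u ⬝ᵥ v) := by
      rw [dotProduct_mulVec, huA, smul_dotProduct]; simp
    have hzz : (2 * Complex.I) * (star u ⬝ᵥ v) = 0 := by linear_combination k1 - k2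
    rcases mul_eq_zero.mp hzz with h | h
    · exact absurd h (by simp [Complex.I_ne_zero])
    · exact h
  have hvu : star v ⬝ᵥ u = 0 := by
    rw [star_dotProduct, huv, star_zero]
  set t : ℝ := Complex.normSq (u 0) + Complex.normSq (u 1) with htdef
  have ht : star u ⬝ᵥ u = (t : ℂ) := by
    simp [dotProduct, Fin.sum_univ_two, Complex.star_def,
      ← Complex.normSq_eq_conj_mul_self, htdef]
  have htpos : 0 < t := by
    rcases Function.ne_iff.mp hu0 with ⟨i, hi⟩
    simp only [Pi.zero_apply] at hi
    fin_cases i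
    · exact add_pos_of_pos_of_nonneg (Complex.normSq_pos.mpr hi) (Complex.normSq_nonneg _)
    · exact add_pos_of_nonneg_of_pos (Complex.normSq_nonneg _) (Complex.normSq_pos.mpr hi)
  -- scalarized inner products
  have sht := ht
  have shuv := huv
  have shvu := hvu
  have shvv := hvv
  simp only [dotProduct, Fin.sum_univ_two, Pi.star_apply, Complex.star_def] at sht shuv shvu shvv
  -- scalarized eigen equations
  have sAu0 := congrFun hAu 0
  have sAu1 := congrFun hAu 1
  have sAv0 := congrFun hAv 0
  have sAv1 := congrFun hAv 1
  have sBu0 := congrFun hv.symm 0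
  have sBu1 := congrFun hv.symm 1
  have sBv0 := congrFun hBv 0
  have sBv1 := congrFun hBv 1
  have sCu0 := congrFun hCu 0
  have sCu1 := congrFun hCu 1
  have sCv0 := congrFun hCv 0
  have sCv1 := congrFun hCv 1
  simp only [Matrix.mulVec, dotProduct, Fin.sum_univ_two, Pi.smul_apply,
    Pi.neg_apply, smul_eq_mul] at sAu0 sAu1 sAv0 sAv1 sBu0 sBu1 sBv0 sBv1 sCu0 sCu1 sCv0 sCv1
  set ρ₀ : Matrix (Fin 2) (Fin 2) ℂ := !![u 0, v 0; u 1, v 1] with hρ₀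
  have h1 : ρ₀ᴴ * ρ₀ = (t : ℂ) • (1 : Matrix (Fin 2) (Fin 2) ℂ) := by
    ext i j
    fin_cases i <;> fin_cases j <;>
      simp [hρ₀, Matrix.mul_apply, Matrix.conjTranspose_apply, Fin.sum_univ_two,
        Matrix.one_apply, Complex.star_def]
    · linear_combination sht
    · linear_combination shuv
    · linear_combination shvu
    · linear_combination shvv.trans sht
  have hAρ : A * ρ₀ = ρ₀ * !![Complex.I, 0; 0, -Complex.I] := by
    ext i j
    fin_cases i <;> fin_cases j <;>
      simp [hρ₀, Matrix.mul_apply, Fin.sum_univ_two]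
    · linear_combination sAu0
    · linear_combination sAv0
    · linear_combination sAu1
    · linear_combination sAv1
  have hBρ : B * ρ₀ = ρ₀ * !![0, -1; 1, 0] := by
    ext i j
    fin_cases i <;> fin_cases j <;>
      simp [hρ₀, Matrix.mul_apply, Fin.sum_univ_two]
    · linear_combination sBu0
    · linear_combination sBv0
    · linear_combination sBu1
    · linear_combination sBv1
  have hCρ : C * ρ₀ = ρ₀ * !![0, Complex.I; Complex.I, 0] := by
    ext i j
    fin_cases i <;> fin_cases j <;>
      simp [hρ₀, Matrix.mul_apply, Fin.sum_univ_two]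
    · linear_combination sCu0
    · linear_combination sCv0
    · linear_combination sCu1
    · linear_combination sCv1
  -- determinant of ρ₀
  set z : ℂ := ρ₀.det with hz
  have hz2 : (Complex.normSq z : ℂ) = (t : ℂ) ^ 2 := by
    have hh := congrArg Matrix.det h1
    rw [Matrix.det_mul, Matrix.det_conjTranspose, Matrix.det_smul, Matrix.det_one] at hh
    rw [Complex.normSq_eq_conj_mul_self]
    simpa [Fintype.card_fin, Complex.star_def] using hh
  have hnz : Complex.normSq z = t ^ 2 := by exact_mod_cast hz2
  have hz0 : z ≠ 0 := by
    intro h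
    rw [h] at hnz
    simp at hnz
    nlinarith [htpos]
  have habs : ‖z‖ = t := by
    rw [← Real.sqrt_sq (norm_nonneg z), ← Complex.normSq_eq_norm_sq, hnz, Real.sqrt_sq htpos.le]
  -- the phase μ and the normalization
  obtain ⟨μ, hμ⟩ := IsAlgClosed.exists_pow_nat_eq ((t : ℂ) / z) (n := 2) (by norm_num)
  have hμabs : ‖μ‖ = 1 := by
    have h2 : ‖μ‖ ^ 2 = 1 := by
      rw [← norm_pow, hμ, norm_div, Complex.norm_real, habs, Real.norm_of_nonneg htpos.le,
        div_self htpos.ne']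
    nlinarith [norm_nonneg μ, h2]
  have hμμ : (starRingEnd ℂ) μ * μ = 1 := by
    have := Complex.normSq_eq_conj_mul_self (z := μ)
    rw [Complex.normSq_eq_norm_sq, hμabs] at this
    simpa using this.symm
  set c : ℝ := Real.sqrt t with hcdef
  have hc2 : (c : ℝ) ^ 2 = t := Real.sq_sqrt htpos.le
  have hcpos : 0 < c := Real.sqrt_pos.mpr htpos
  have hcne : (c : ℂ) ≠ 0 := by exact_mod_cast hcpos.ne'
  have htc : ((c : ℂ)) ^ 2 = (t : ℂ) := by exact_mod_cast hc2
  have htne : (t : ℂ) ≠ 0 := by exact_mod_cast htpos.ne'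
  set ρ : Matrix (Fin 2) (Fin 2) ℂ := (μ / (c : ℂ)) • ρ₀ with hρdef
  have hdet : ρ.det = 1 := by
    have hd : ρ.det = (μ / (c : ℂ)) ^ 2 * z := by
      rw [hρdef, hz, hρ₀]
      simp [Matrix.det_fin_two, Matrix.smul_apply]
      ring
    rw [hd, div_pow, hμ, htc]
    field_simp
  have hinv : ρ * ρ⁻¹ = 1 := Matrix.mul_nonsing_inv _ (by rw [hdet]; exact isUnit_one)
  have key : ∀ (X EX : Matrix (Fin 2) (Fin 2) ℂ), X * ρ₀ = ρ₀ * EX → X = ρ * EX * ρ⁻¹ := by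
    intro X EX hX
    have hcomm : X * ρ = ρ * EX := by
      rw [hρdef, Matrix.mul_smul, Matrix.smul_mul, hX]
    rw [← hcomm, Matrix.mul_assoc, hinv, Matrix.mul_one]
  refine ⟨ρ, ?_, hdet, key A _ hAρ, key B _ hBρ, key C _ hCρ⟩
  rw [hρdef, Matrix.conjTranspose_smul, Matrix.smul_mul, Matrix.mul_smul, h1,
    smul_smul, smul_smul]
  have hsc : star (μ / (c : ℂ)) * (μ / (c : ℂ)) * (t : ℂ) = 1 := by
    have hstar : star (μ / (c : ℂ)) = (starRingEnd ℂ) μ / (c : ℂ) := by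
      simp [Complex.star_def, map_div₀, Complex.conj_ofReal]
    rw [hstar]
    have hre : ((starRingEnd ℂ) μ / (c : ℂ)) * (μ / (c : ℂ)) * (t : ℂ)
        = ((starRingEnd ℂ) μ * μ) * ((t : ℂ) / ((c : ℂ) ^ 2)) := by
      ring
    rw [hre, hμμ, one_mul, htc, div_self htne]
  rw [hsc, one_smul]


/-- Let `E₁ = [[i,0],[0,−i]]`, `E₂ = [[0,−1],[1,0]]`, `E₃ = [[0,i],[i,0]]`
in `su(2)`, satisfying `[E₂,E₃] = −2E₁`, `[E₃,E₁] = −2E₂`, `[E₁,E₂] = −2E₃`.  If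
`Y₁, Y₂, Y₃ ∈ su(2)` satisfy `Y₁ ≠ 0` and the same bracket relations, then there is
`ρ ∈ SU(2)` with `Yᵢ = ρ Eᵢ ρ⁻¹` for `i = 1, 2, 3`. (Indices shifted down by one.) -/
theorem su2_frame_conjugate
    (E Y : Fin 3 → Matrix (Fin 2) (Fin 2) ℂ)
    (hE0 : E 0 = !![Complex.I, 0; 0, -Complex.I])
    (hE1 : E 1 = !![0, -1; 1, 0])
    (hE2 : E 2 = !![0, Complex.I; Complex.I, 0])
    (hYmem : ∀ i, (Y i)ᴴ = -Y i ∧ (Y i).trace = 0)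
    (hY0 : Y 0 ≠ 0)
    (h₁ : Y 1 * Y 2 - Y 2 * Y 1 = (-2 : ℂ) • Y 0)
    (h₂ : Y 2 * Y 0 - Y 0 * Y 2 = (-2 : ℂ) • Y 1)
    (h₃ : Y 0 * Y 1 - Y 1 * Y 0 = (-2 : ℂ) • Y 2) :
    ∃ ρ : Matrix (Fin 2) (Fin 2) ℂ, ρᴴ * ρ = 1 ∧ ρ.det = 1 ∧
      ∀ i, Y i = ρ * E i * ρ⁻¹ := by
  obtain ⟨hAB, hCA, hCB, hA2, hB2⟩ :=
    products (Y 0) (Y 1) (Y 2) (hYmem 0).2 (hYmem 1).2 (hYmem 2).2 hY0 h₁ h₂ h₃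
  obtain ⟨ρ, hu, hd, hA, hB, hC⟩ :=
    build (Y 0) (Y 1) (Y 2) (hYmem 0).1 (hYmem 1).1 (hYmem 0).2 hA2 hB2 hAB hCA hCB
  refine ⟨ρ, hu, hd, fun i => ?_⟩
  fin_cases i
  · simpa [hE0] using hA
  · simpa [hE1] using hB
  · simpa [hE2] using hC
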